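/- Let B = {b_1,…,b_w} be a Sidon set of order t in a finite abelian group G and b ∈ G. The code C = { x ∈ Z_q^n : wt(x) = w and Σ_{i=1}^w ⌊r_i(x)/k⌋ b_i = b } can correct t insertions of blocks 0^k: for any two (not necessarily distinct) codewords x, x' ∈ C and any u, u' ≤ t, if a string y is obtainable from x by u insertions of 0^k and also from x' by u' insertions of 0^k, then x = x'. -/

import Mathlib

/-- The Hamming weight of a string over `ℤ_q`. -/
def wt (q : ℕ) (x : List (ZMod q)) : ℕ := x.countP fun a => decide (a ≠ 0)

/-- The list `[r_0(x), r_1(x), …, r_w(x)]` of lengths of the runs of zeros of `x`,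
where `x = 0^{r_0} α_1 0^{r_1} α_2 ⋯ α_w 0^{r_w}` with all `α_i ≠ 0`. -/
def zeroRuns (q : ℕ) : List (ZMod q) → List ℕ
  | [] => [0]
  | a :: rest =>
    if a = 0 then
      match zeroRuns q rest with
      | r :: rs => (r + 1) :: rs
      | [] => [1]
    else 0 :: zeroRuns q rest

/-- One insertion of a block `0^k` at some position of the string `x`. -/
def Ins (q k : ℕ) (x y : List (ZMod q)) : Prop :=
  ∃ j ≤ x.length, y = x.take j ++ List.replicate k (0 : ZMod q) ++ x.drop j

/-- `InsN q k u x y`: `y` is obtainable from `x` by `u` successive insertions of `0^k`. -/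
def InsN (q k : ℕ) : ℕ → List (ZMod q) → List (ZMod q) → Prop
  | 0, x, y => y = x
  | u + 1, x, y => ∃ z, Ins q k x z ∧ InsN q k u z y

namespace St6
variable {q k : ℕ}

theorem zeroRuns_ne_nil (x : List (ZMod q)) : zeroRuns q x ≠ [] := by
  induction x with
  | nil => simp [zeroRuns]
  | cons a rest ih =>
    by_cases h : a = 0
    · rcases hz : zeroRuns q rest with _ | ⟨r, rs⟩ <;> simp [zeroRuns, h, hz]
    · simp [zeroRuns, h]

theorem zeroRuns_zero_cons (l : List (ZMod q)) {r : ℕ} {rs : List ℕ}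
    (h : zeroRuns q l = r :: rs) : zeroRuns q ((0 : ZMod q) :: l) = (r + 1) :: rs := by
  simp [zeroRuns, h]

theorem zeroRuns_ne_cons {a : ZMod q} (ha : a ≠ 0) (l : List (ZMod q)) :
    zeroRuns q (a :: l) = 0 :: zeroRuns q l := by
  simp [zeroRuns, ha]

/-- rebuild a string from its zero-run list and its nonzero letters. -/
def rebuild (q : ℕ) : List ℕ → List (ZMod q) → List (ZMod q)
  | r :: rs, a :: as => List.replicate r 0 ++ a :: rebuild q rs as
  | r :: _, [] => List.replicate r 0
  | [], _ => []

theorem rebuild_succ (r : ℕ) (rs : List ℕ) (l : List (ZMod q)) :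
    rebuild q ((r + 1) :: rs) l = 0 :: rebuild q (r :: rs) l := by
  cases l <;> simp [rebuild, List.replicate_succ]

theorem rebuild_zeroRuns (x : List (ZMod q)) :
    rebuild q (zeroRuns q x) (x.filter fun a => decide (a ≠ 0)) = x := by
  induction x with
  | nil => simp [zeroRuns, rebuild]
  | cons a rest ih =>
    by_cases h : a = 0
    · rcases hz : zeroRuns q rest with _ | ⟨r, rs⟩
      · exact absurd hz (zeroRuns_ne_nil rest)
      · subst h
        rw [zeroRuns_zero_cons rest hz]
        have : ((0 : ZMod q) :: rest).filter (fun a => decide (a ≠ 0))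
            = rest.filter (fun a => decide (a ≠ 0)) := by simp
        rw [this, rebuild_succ, ← hz, ih]
    · rw [zeroRuns_ne_cons h]
      have : (a :: rest).filter (fun a => decide (a ≠ 0))
          = a :: rest.filter (fun a => decide (a ≠ 0)) := by simp [h]
      rw [this]
      rcases hz : zeroRuns q rest with _ | ⟨r, rs⟩
      · exact absurd hz (zeroRuns_ne_nil rest)
      · simp only [rebuild, List.replicate_zero, List.nil_append]
        rw [← hz, ih]

theorem length_zeroRuns (x : List (ZMod q)) :
    (zeroRuns q x).length = (x.countP fun a => decide (a ≠ 0)) + 1 := by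
  induction x with
  | nil => simp [zeroRuns]
  | cons a rest ih =>
    by_cases h : a = 0
    · rcases hz : zeroRuns q rest with _ | ⟨r, rs⟩
      · exact absurd hz (zeroRuns_ne_nil rest)
      · subst h
        rw [zeroRuns_zero_cons rest hz]
        simpa [hz, List.countP_cons] using ih
    · rw [zeroRuns_ne_cons h]
      simp [List.countP_cons, h, ih]

inductive Bump (k : ℕ) : List ℕ → List ℕ → Prop
  | head : ∀ r rs, Bump k (r :: rs) ((r + k) :: rs)
  | tail : ∀ r {rs rs'}, Bump k rs rs' → Bump k (r :: rs) (r :: rs')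

theorem zeroRuns_replicate_append (m : ℕ) (l : List (ZMod q)) {r : ℕ} {rs : List ℕ}
    (h : zeroRuns q l = r :: rs) :
    zeroRuns q (List.replicate m (0 : ZMod q) ++ l) = (r + m) :: rs := by
  induction m with
  | zero => simpa using h
  | succ m ih =>
    rw [List.replicate_succ, List.cons_append, zeroRuns_zero_cons _ ih]
    simp [Nat.add_assoc]

theorem bump_succ {r r' : ℕ} {rs rs' : List ℕ} (h : Bump k (r :: rs) (r' :: rs')) :
    Bump k ((r + 1) :: rs) ((r' + 1) :: rs') := by
  cases h with
  | head =>
    have := Bump.head (k := k) (r + 1) rs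
    simpa [Nat.add_right_comm] using this
  | tail _ h => exact Bump.tail _ h

theorem ins_bump {x y : List (ZMod q)} (h : Ins q k x y) :
    Bump k (zeroRuns q x) (zeroRuns q y) := by
  obtain ⟨j, hj, rfl⟩ := h
  induction x generalizing j with
  | nil =>
    have hj0 : j = 0 := Nat.le_zero.mp hj
    subst hj0
    rcases hz : zeroRuns q ([] : List (ZMod q)) with _ | ⟨r, rs⟩
    · exact absurd hz (zeroRuns_ne_nil _)
    · simp only [List.take_nil, List.drop_nil, List.nil_append, List.append_nil]
      have h2 : zeroRuns q (List.replicate k (0 : ZMod q)) = (r + k) :: rs := by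
        rw [← List.append_nil (List.replicate k (0 : ZMod q))]
        exact zeroRuns_replicate_append k _ hz
      rw [h2]
      exact Bump.head r rs
  | cons a rest ih =>
    rcases j with _ | j
    · rcases hz : zeroRuns q (a :: rest) with _ | ⟨r, rs⟩
      · exact absurd hz (zeroRuns_ne_nil _)
      · simp only [List.take_zero, List.drop_zero, List.nil_append]
        rw [zeroRuns_replicate_append k _ hz]
        exact Bump.head r rs
    · have hj' : j ≤ rest.length := by simpa using hj
      have hIH := ih j hj'
      simp only [List.take_succ_cons, List.drop_succ_cons, List.cons_append]
      by_cases h : a = 0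
      · subst h
        rcases hz1 : zeroRuns q rest with _ | ⟨r, rs⟩
        · exact absurd hz1 (zeroRuns_ne_nil _)
        rcases hz2 : zeroRuns q (rest.take j ++ List.replicate k (0 : ZMod q) ++ rest.drop j)
            with _ | ⟨r', rs'⟩
        · exact absurd hz2 (zeroRuns_ne_nil _)
        rw [zeroRuns_zero_cons _ hz1, zeroRuns_zero_cons _ hz2]
        rw [hz1, hz2] at hIH
        exact bump_succ hIH
      · rw [zeroRuns_ne_cons h, zeroRuns_ne_cons h]
        exact Bump.tail _ hIH


theorem ins_filter {x y : List (ZMod q)} (h : Ins q k x y) :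
    y.filter (fun a => decide (a ≠ 0)) = x.filter (fun a => decide (a ≠ 0)) := by
  obtain ⟨j, hj, rfl⟩ := h
  simp only [List.filter_append, List.filter_replicate]
  norm_num
  rw [← List.filter_append, List.take_append_drop]

theorem ins_length {x y : List (ZMod q)} (h : Ins q k x y) :
    y.length = x.length + k := by
  obtain ⟨j, hj, rfl⟩ := h
  simp only [List.length_append, List.length_replicate, List.length_take, List.length_drop]
  omega

def bumpF (k : ℕ) (r d : ℕ) : ℕ := r + k * d

theorem zipWith_zero : ∀ rs : List ℕ,
    List.zipWith (bumpF k) rs (List.replicate rs.length 0) = rs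
  | [] => rfl
  | r :: rs => by simp [bumpF, List.replicate_succ, zipWith_zero rs]

theorem bump_delta {rs rs' : List ℕ} (h : Bump k rs rs') :
    ∃ c : List ℕ, c.length = rs.length ∧ c.sum = 1 ∧
      rs' = List.zipWith (bumpF k) rs c := by
  induction h with
  | head r rs =>
    exact ⟨1 :: List.replicate rs.length 0, by simp, by simp,
      by simp [bumpF, zipWith_zero, Nat.add_comm]⟩
  | tail r h ih =>
    obtain ⟨c, hc1, hc2, hc3⟩ := ih
    exact ⟨0 :: c, by simp [hc1], by simp [hc2], by simp [bumpF, hc3]⟩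

theorem zip_comp : ∀ (rs c1 c2 : List ℕ), c1.length = rs.length →
    List.zipWith (bumpF k) (List.zipWith (bumpF k) rs c1) c2
      = List.zipWith (bumpF k) rs (List.zipWith (· + ·) c1 c2)
  | [], _, _, _ => by simp
  | r :: rs, [], c2, h => by simp at h
  | r :: rs, d1 :: c1, [], h => by simp
  | r :: rs, d1 :: c1, d2 :: c2, h => by
    simp only [List.zipWith_cons_cons]
    rw [zip_comp rs c1 c2 (by simpa using h)]
    simp [bumpF, Nat.mul_add]
    ring

theorem sum_zipWith_add : ∀ (c1 c2 : List ℕ), c1.length = c2.length →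
    (List.zipWith (· + ·) c1 c2).sum = c1.sum + c2.sum
  | [], [], _ => rfl
  | [], _ :: _, h => by simp at h
  | _ :: _, [], h => by simp at h
  | a :: c1, b :: c2, h => by
    simp only [List.zipWith_cons_cons, List.sum_cons]
    rw [sum_zipWith_add c1 c2 (by simpa using h)]
    ring

theorem length_zipWith_add : ∀ (c1 c2 : List ℕ), c1.length = c2.length →
    (List.zipWith (· + ·) c1 c2).length = c1.length := by
  intro c1 c2 h
  simp [h]

theorem insN_delta : ∀ (u : ℕ) {x y : List (ZMod q)}, InsN q k u x y →
    ∃ c : List ℕ, c.length = (zeroRuns q x).length ∧ c.sum = u ∧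
      zeroRuns q y = List.zipWith (bumpF k) (zeroRuns q x) c ∧
      y.filter (fun a => decide (a ≠ 0)) = x.filter (fun a => decide (a ≠ 0)) ∧
      y.length = x.length + u * k
  | 0, x, y, h => by
    cases h
    exact ⟨List.replicate (zeroRuns q x).length 0, by simp, by simp,
      (zipWith_zero _).symm, rfl, by simp⟩
  | u + 1, x, y, h => by
    obtain ⟨z, hxz, hzy⟩ := h
    obtain ⟨c1, hc11, hc12, hc13⟩ := bump_delta (ins_bump hxz)
    obtain ⟨c2, hc21, hc22, hc23, hf2, hl2⟩ := insN_delta u hzy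
    rw [hc13] at hc21 hc23
    have hlen : c2.length = (zeroRuns q x).length := by
      rw [hc21, List.length_zipWith, hc11]
      omega
    refine ⟨List.zipWith (· + ·) c1 c2, ?_, ?_, ?_, ?_, ?_⟩
    · rw [length_zipWith_add c1 c2 (by omega), hc11]
    · rw [sum_zipWith_add c1 c2 (by omega), hc12, hc22]; ring
    · rw [hc23, zip_comp _ _ _ hc11]
    · rw [hf2, ins_filter hxz]
    · rw [hl2, ins_length hxz]; ring


theorem sum_getD : ∀ (m : ℕ) (l : List ℕ), l.length = m →
    ∑ i : Fin m, l.getD (i : ℕ) 0 = l.sum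
  | 0, [], _ => by simp
  | 0, _ :: _, h => by simp at h
  | m + 1, [], h => by simp at h
  | m + 1, a :: l, h => by
    rw [Fin.sum_univ_succ]
    simp only [Fin.val_zero, List.getD_cons_zero, Fin.val_succ, List.getD_cons_succ]
    rw [sum_getD m l (by simpa using h), List.sum_cons]

theorem getD_zip {rs c : List ℕ} (h : c.length = rs.length) {j : ℕ} (hj : j < rs.length) :
    (List.zipWith (bumpF k) rs c).getD j 0 = rs.getD j 0 + k * c.getD j 0 := by
  have h1 : j < (List.zipWith (bumpF k) rs c).length := by
    rw [List.length_zipWith]; omega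
  rw [List.getD_eq_getElem _ _ h1, List.getD_eq_getElem _ _ hj,
    List.getD_eq_getElem _ _ (by omega : j < c.length), List.getElem_zipWith]
  rfl

theorem msum {ι α : Type*} [DecidableEq ι] [AddCommMonoid α] (s : Finset ι) (d : ι → ℕ)
    (f : ι → α) :
    ((∑ i ∈ s, d i • ({i} : Multiset ι)).map f).sum = ∑ i ∈ s, d i • f i := by
  induction s using Finset.induction with
  | empty => simp
  | insert _ _ h ih =>
    rw [Finset.sum_insert h, Finset.sum_insert h, Multiset.map_add, Multiset.sum_add, ih]
    simp [Multiset.map_nsmul, Multiset.sum_nsmul]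

theorem mcard {ι : Type*} [DecidableEq ι] (s : Finset ι) (d : ι → ℕ) :
    Multiset.card (∑ i ∈ s, d i • ({i} : Multiset ι)) = ∑ i ∈ s, d i := by
  induction s using Finset.induction with
  | empty => simp
  | insert _ _ h ih => rw [Finset.sum_insert h, Finset.sum_insert h, Multiset.card_add, ih]; simp

theorem mcount {ι : Type*} [DecidableEq ι] (d : ι → ℕ) (j : ι) [Fintype ι] :
    Multiset.count j (∑ i : ι, d i • ({i} : Multiset ι)) = d j := by
  rw [Multiset.count_sum']
  simp [Multiset.count_singleton]

end St6

/-- the code `C = {x ∈ (ℤ_q)^n : wt(x) = w, Σ_{i=1}^w ⌊r_i(x)/k⌋ b_i = b}`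
built from a Sidon set `B = {b_1,…,b_w}` of order `t` corrects `t` insertions of
blocks `0^k`: if `y` is obtainable from codewords `x` and `x'` by `u ≤ t` and
`u' ≤ t` insertions of `0^k` respectively, then `x = x'`. -/
theorem stmt6 {G : Type*} [AddCommGroup G] [Fintype G]
    (q n w t k : ℕ) (hq : 2 ≤ q) (hn : 1 ≤ n) (hw : 1 ≤ w) (ht : 1 ≤ t) (hk : 1 ≤ k)
    (b : Fin w → G) (hb : Function.Injective b)
    (hSidon : ∀ s s' : Multiset (Fin w), Multiset.card s ≤ t → Multiset.card s' ≤ t →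
      (s.map b).sum = (s'.map b).sum → s = s')
    (b0 : G)
    (C : Set (List (ZMod q)))
    (hC : C = {x | x.length = n ∧ wt q x = w ∧
      ∑ i : Fin w, ((zeroRuns q x).getD ((i : ℕ) + 1) 0 / k) • b i = b0})
    (x x' : List (ZMod q)) (hx : x ∈ C) (hx' : x' ∈ C)
    (u u' : ℕ) (hu : u ≤ t) (hu' : u' ≤ t)
    (y : List (ZMod q)) (hxy : InsN q k u x y) (hx'y : InsN q k u' x' y) :
    x = x' := by
  subst hC
  obtain ⟨hxn, hxw, hxs⟩ := hx
  obtain ⟨hxn', hxw', hxs'⟩ := hx'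
  obtain ⟨c, hcl, hcs, hcz, hcf, hcL⟩ := St6.insN_delta u hxy
  obtain ⟨c', hcl', hcs', hcz', hcf', hcL'⟩ := St6.insN_delta u' hx'y
  have hrl : (zeroRuns q x).length = w + 1 := by
    rw [St6.length_zeroRuns]; rw [show (x.countP fun a => decide (a ≠ 0)) = w from hxw]
  have hrl' : (zeroRuns q x').length = w + 1 := by
    rw [St6.length_zeroRuns]; rw [show (x'.countP fun a => decide (a ≠ 0)) = w from hxw']
  have hcl1 : c.length = w + 1 := by omega
  have hcl1' : c'.length = w + 1 := by omega
  -- u = u'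
  have h3 : u * k = u' * k := by
    have h1 : x.length + u * k = x'.length + u' * k := by rw [← hcL, ← hcL']
    rw [hxn, hxn'] at h1
    exact Nat.add_left_cancel h1
  have huu : u = u' := Nat.eq_of_mul_eq_mul_right (by omega) h3
  -- index functions
  set ci : Fin w → ℕ := fun i => c.getD ((i : ℕ) + 1) 0 with hci
  set ci' : Fin w → ℕ := fun i => c'.getD ((i : ℕ) + 1) 0 with hci'
  have key : ∀ i : Fin w,
      (zeroRuns q y).getD ((i : ℕ) + 1) 0 = (zeroRuns q x).getD ((i : ℕ) + 1) 0 + k * ci i := by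
    intro i
    rw [hcz]
    exact St6.getD_zip (by omega) (by omega)
  have key' : ∀ i : Fin w,
      (zeroRuns q y).getD ((i : ℕ) + 1) 0 = (zeroRuns q x').getD ((i : ℕ) + 1) 0 + k * ci' i := by
    intro i
    rw [hcz']
    exact St6.getD_zip (by omega) (by omega)
  -- sums of tails
  have htail : c.getD 0 0 + ∑ i : Fin w, ci i = u := by
    have := St6.sum_getD (w + 1) c hcl1
    rw [Fin.sum_univ_succ, hcs] at this
    exact this
  have htail' : c'.getD 0 0 + ∑ i : Fin w, ci' i = u' := by
    have := St6.sum_getD (w + 1) c' hcl1'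
    rw [Fin.sum_univ_succ, hcs'] at this
    exact this
  -- checksum of y two ways
  have hchk : b0 + ∑ i : Fin w, (ci i) • b i = b0 + ∑ i : Fin w, (ci' i) • b i := by
    have e1 : ∑ i : Fin w, ((zeroRuns q y).getD ((i : ℕ) + 1) 0 / k) • b i
        = b0 + ∑ i : Fin w, (ci i) • b i := by
      rw [← hxs, ← Finset.sum_add_distrib]
      refine Finset.sum_congr rfl fun i _ => ?_
      rw [key i, Nat.add_mul_div_left _ _ (by omega : 0 < k), add_nsmul]
    have e2 : ∑ i : Fin w, ((zeroRuns q y).getD ((i : ℕ) + 1) 0 / k) • b i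
        = b0 + ∑ i : Fin w, (ci' i) • b i := by
      rw [← hxs', ← Finset.sum_add_distrib]
      refine Finset.sum_congr rfl fun i _ => ?_
      rw [key' i, Nat.add_mul_div_left _ _ (by omega : 0 < k), add_nsmul]
    rw [← e1, e2]
  have hchk2 : ∑ i : Fin w, (ci i) • b i = ∑ i : Fin w, (ci' i) • b i :=
    add_left_cancel hchk
  -- Sidon
  have hseq : (∑ i : Fin w, ci i • ({i} : Multiset (Fin w)))
      = ∑ i : Fin w, ci' i • ({i} : Multiset (Fin w)) := by
    apply hSidon
    · rw [St6.mcard]; omega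
    · rw [St6.mcard]; omega
    · rw [St6.msum, St6.msum]; exact hchk2
  have hcieq : ∀ i : Fin w, ci i = ci' i := by
    intro i
    have := congrArg (Multiset.count i) hseq
    rwa [St6.mcount, St6.mcount] at this
  have hhead : c.getD 0 0 = c'.getD 0 0 := by
    have : ∑ i : Fin w, ci i = ∑ i : Fin w, ci' i := Finset.sum_congr rfl fun i _ => hcieq i
    omega
  -- run lists equal
  have hcd : ∀ j < w + 1, c.getD j 0 = c'.getD j 0 := by
    intro j hj
    rcases j with _ | j
    · exact hhead
    · exact hcieq ⟨j, by omega⟩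
  have hruns : zeroRuns q x = zeroRuns q x' := by
    apply List.ext_getElem (by rw [hrl, hrl'])
    intro j h1 h2
    have hj : j < w + 1 := by rwa [hrl] at h1
    have e1 : (zeroRuns q y).getD j 0 = (zeroRuns q x).getD j 0 + k * c.getD j 0 := by
      rw [hcz]; exact St6.getD_zip (by omega) (by omega)
    have e2 : (zeroRuns q y).getD j 0 = (zeroRuns q x').getD j 0 + k * c'.getD j 0 := by
      rw [hcz']; exact St6.getD_zip (by omega) (by omega)
    have e3 := hcd j hj
    have e4 : (zeroRuns q x).getD j 0 = (zeroRuns q x').getD j 0 := by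
      rw [e3] at e1
      omega
    rw [← List.getD_eq_getElem _ 0 h1, ← List.getD_eq_getElem _ 0 h2, e4]
  have hfil : x.filter (fun a => decide (a ≠ 0)) = x'.filter (fun a => decide (a ≠ 0)) := by
    rw [← hcf, ← hcf']
  calc x = St6.rebuild q (zeroRuns q x) (x.filter fun a => decide (a ≠ 0)) :=
        (St6.rebuild_zeroRuns x).symm
    _ = St6.rebuild q (zeroRuns q x') (x'.filter fun a => decide (a ≠ 0)) := by
        rw [hruns, hfil]
    _ = x' := St6.rebuild_zeroRuns x'
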